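/- Let (X, d_o, a) be an O-metric space with o : I_a × I_a → [0,∞). Suppose o is continuous at (a,a), non-decreasing in both variables, and o(u,a) = a ⟺ u = a. If a sequence (x_n) in X satisfies d_o(x_n, x) → a and d_o(x_n, y) → a for x, y ∈ X, then x = y (limits are unique). -/

import Mathlib

open Filter

theorem stmt_12 {X : Type*} (a : ℝ) (Ia : Set ℝ) (hIa : Ia ⊆ Set.Ici 0) (haI : a ∈ Ia)
    (d : X → X → ℝ) (o : ℝ → ℝ → ℝ)
    (hdmem : ∀ x y, d x y ∈ Ia)
    (hself : ∀ x y, d x y = a ↔ x = y)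
    (hsymm : ∀ x y, d x y = d y x)
    (htri : ∀ x y z, d x z ≤ o (d x y) (d y z))
    (hcont : ContinuousAt (fun p : ℝ × ℝ => o p.1 p.2) (a, a))
    (hmono : ∀ u₁ ∈ Ia, ∀ u₂ ∈ Ia, ∀ v₁ ∈ Ia, ∀ v₂ ∈ Ia,
        u₁ ≤ u₂ → v₁ ≤ v₂ → o u₁ v₁ ≤ o u₂ v₂)
    (hzero : ∀ u ∈ Ia, (o u a = a ↔ u = a))
    (u : ℕ → X) (x y : X)
    (hx : Tendsto (fun n => d (u n) x) atTop (nhds a))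
    (hy : Tendsto (fun n => d (u n) y) atTop (nhds a)) :
    x = y := by
  have haa : o a a = a := (hzero a haI).mpr rfl
  have htend : Tendsto (fun n => o (d (u n) x) (d (u n) y)) atTop (nhds a) := by
    have := hcont.tendsto.comp (hx.prodMk_nhds hy)
    simpa [haa, Function.comp_def] using this
  have hle : d x y ≤ a := by
    refine ge_of_tendsto htend (Eventually.of_forall fun n => ?_)
    calc d x y ≤ o (d x (u n)) (d (u n) y) := htri x (u n) y
    _ = o (d (u n) x) (d (u n) y) := by rw [hsymm x (u n)]
  have hge : a ≤ o (d x y) a := by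
    calc a = d x x := ((hself x x).mpr rfl).symm
    _ ≤ o (d x y) (d y x) := htri x y x
    _ ≤ o (d x y) a := by
        rw [hsymm y x]
        exact hmono _ (hdmem x y) _ (hdmem x y) _ (hdmem x y) _ haI le_rfl hle
  have hle' : o (d x y) a ≤ a := by
    calc o (d x y) a ≤ o a a := hmono _ (hdmem x y) _ haI _ haI _ haI hle le_rfl
    _ = a := haa
  exact (hself x y).mp ((hzero _ (hdmem x y)).mp (le_antisymm hle' hge))
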